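/- arXiv:2309.15406 — 4 statements merged into one kernel-verified Lean document; each statement's English description precedes it below -/
import Mathlib

section
/- Let N > 1, α with gcd(2α, N) = 1, and let c be an integer with c^{2α} ≡ (1+N)^{2α·m} (mod N²) for some 0 ≤ m < N. Let sk₁, sk₂ be integers with sk₁ + sk₂ = (2α)·((2α)⁻¹ mod N) + η·2α·N for some η ≥ 0. Define M₁ = c^{sk₁} mod N², M₂ = c^{sk₂} mod N². Then ((M₁·M₂ mod N²) − 1)/N mod N = m, i.e., threshold decryption recovers the plaintext. -/
lemma one_add_pow_modeq (N : ℤ) (K : ℕ) :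
    (1 + N) ^ K ≡ 1 + (K : ℤ) * N [ZMOD N ^ 2] := by
  induction K with
  | zero => simp
  | succ k ih =>
    have h1 : (1 + N) ^ (k + 1) ≡ (1 + (k : ℤ) * N) * (1 + N) [ZMOD N ^ 2] := by
      rw [pow_succ (1 + N) k]; exact ih.mul_right _
    have h2 : (1 + (k : ℤ) * N) * (1 + N) ≡ 1 + ((k : ℤ) + 1) * N [ZMOD N ^ 2] :=
      Int.modEq_iff_dvd.mpr ⟨-k, by ring⟩
    have := h1.trans h2
    simpa [add_mul] using this

/-- Correctness of FastPaiTD threshold decryption: with `M₁ = c^{sk₁} mod N²`,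
`M₂ = c^{sk₂} mod N²`, `sk₁ + sk₂ = (2α)·((2α)⁻¹ mod N) + η·2αN`,
threshold decryption `((M₁·M₂ mod N²) − 1)/N mod N` recovers `m`. -/
theorem fastPaiTD_TDec_correct (N α m b sk₁ sk₂ η : ℕ) (c : ℤ)
    (hN : 1 < N) (hα : 0 < α) (hgcd : Nat.gcd (2 * α) N = 1)
    (hm : m < N)
    (hc : c ^ (2 * α) ≡ (1 + (N : ℤ)) ^ (2 * α * m) [ZMOD (N : ℤ) ^ 2])
    (hbN : b < N) (hb : (2 * α * b) % N = 1 % N)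
    (hsk : sk₁ + sk₂ = 2 * α * b + η * (2 * α * N)) :
    ((((c ^ sk₁ % (N : ℤ) ^ 2) * (c ^ sk₂ % (N : ℤ) ^ 2)) % (N : ℤ) ^ 2 - 1)
        / (N : ℤ)) % (N : ℤ) = (m : ℤ) := by
  have hN0 : (0 : ℤ) < (N : ℤ) := by exact_mod_cast Nat.lt_of_lt_of_le Nat.zero_lt_one hN.le
  set n2 : ℤ := (N : ℤ) ^ 2 with hn2
  set K : ℕ := 2 * α * m * (b + η * N) with hKdef
  have hmul : ((c ^ sk₁ % n2) * (c ^ sk₂ % n2)) % n2 = (c ^ (sk₁ + sk₂)) % n2 := by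
    rw [pow_add]; exact (Int.mul_emod _ _ _).symm
  have hK : c ^ (sk₁ + sk₂) ≡ (1 + (N : ℤ)) ^ K [ZMOD n2] := by
    have he : c ^ (sk₁ + sk₂) = (c ^ (2 * α)) ^ (b + η * N) := by
      rw [← pow_mul]; congr 1; rw [hsk]; ring
    rw [he]
    calc (c ^ (2 * α)) ^ (b + η * N)
        ≡ ((1 + (N : ℤ)) ^ (2 * α * m)) ^ (b + η * N) [ZMOD n2] := hc.pow _
      _ = (1 + (N : ℤ)) ^ K := by rw [← pow_mul]
  have hpow := one_add_pow_modeq (N : ℤ) K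
  have h1 : K ≡ m [MOD N] := by
    have hb' : 2 * α * b ≡ 1 [MOD N] := hb
    calc K = (2 * α * b) * m + (2 * α * m * η) * N := by rw [hKdef]; ring
      _ ≡ 1 * m + (2 * α * m * η) * N [MOD N] := (hb'.mul_right m).add_right _
      _ ≡ 1 * m + 0 [MOD N] :=
          Nat.ModEq.add_left _ ((Nat.modEq_zero_iff_dvd).mpr (dvd_mul_left N _))
      _ = m := by ring
  have h2 : ((K : ℕ) : ℤ) ≡ (m : ℤ) [ZMOD (N : ℤ)] := by
    show ((K : ℕ) : ℤ) % N = (m : ℤ) % N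
    exact_mod_cast h1
  obtain ⟨t, ht⟩ := Int.modEq_iff_dvd.mp h2
  have hKm : ((K : ℕ) : ℤ) * N ≡ (m : ℤ) * N [ZMOD n2] :=
    Int.modEq_iff_dvd.mpr ⟨t, by rw [hn2]; linear_combination (N : ℤ) * ht⟩
  have h3 : c ^ (sk₁ + sk₂) ≡ 1 + (m : ℤ) * N [ZMOD n2] :=
    (hK.trans hpow).trans (Int.ModEq.add_left 1 hKm)
  have hlt : 1 + (m : ℤ) * N < n2 := by
    have hm' : (m : ℤ) ≤ (N : ℤ) - 1 := by
      have : (m : ℤ) < (N : ℤ) := by exact_mod_cast hm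
      linarith
    rw [hn2]; nlinarith
  have hfinal : ((c ^ sk₁ % n2) * (c ^ sk₂ % n2)) % n2 = 1 + (m : ℤ) * N := by
    rw [hmul, h3, Int.emod_eq_of_lt (by positivity) hlt]
  rw [hfinal]
  have hdiv : (1 + (m : ℤ) * N - 1) / N = m := by
    rw [add_sub_cancel_left, Int.mul_ediv_cancel _ hN0.ne']
  rw [hdiv, Int.emod_eq_of_lt (by positivity) (by exact_mod_cast hm)]
end

section
/- Let l, σ, N, x, y, r₁, r₂ be as follows: N > 2^{σ+l+3}, x, y ∈ [−2^l, 2^l] integers, r₁ ∈ [1, 2^σ), r₂ ≤ N/2, r₁ + r₂ > N/2. Then r₁·(x − y + 1) + r₂ > N/2 if and only if x ≥ y. -/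
/-- Correctness of the SCMP comparison test (π = 0):
`r₁(x−y+1)+r₂ > N/2 ↔ x ≥ y`. -/
theorem scmp_test_pi0 (l σ : ℕ) (hl : 0 < l) (hσ : 0 < σ) (N x y r₁ r₂ : ℤ)
    (hN : 2 ^ (σ + l + 3) < N)
    (hx₁ : -2 ^ l ≤ x) (hx₂ : x ≤ 2 ^ l) (hy₁ : -2 ^ l ≤ y) (hy₂ : y ≤ 2 ^ l)
    (hr₁ : 1 ≤ r₁) (hr₁' : r₁ < 2 ^ σ)
    (hr₂ : 0 ≤ r₂) (hr₂' : r₂ ≤ N / 2) (hsum : N / 2 < r₁ + r₂) :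
    N / 2 < r₁ * (x - y + 1) + r₂ ↔ y ≤ x := by
  constructor
  · intro h
    by_contra hlt
    push_neg at hlt
    have h1 : x - y + 1 ≤ 0 := by omega
    nlinarith
  · intro h
    have h1 : 1 ≤ x - y + 1 := by omega
    nlinarith
end

section
/- Let l, σ, N be as above (N > 2^{σ+l+3}), x, y ∈ [−2^l, 2^l] integers, r₁ ∈ [1, 2^σ), r₂ ≤ N/2, r₁ + r₂ > N/2. Then 0 < r₁·(y − x) + r₂ < N, and r₁·(y − x) + r₂ ≤ N/2 if and only if x ≥ y. -/
/-- Correctness of the SCMP comparison test (π = 1): `r₁(y−x)+r₂ ∈ (0, N)` and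
`r₁(y−x)+r₂ ≤ N/2 ↔ x ≥ y`. -/
theorem scmp_test_pi1 (l σ : ℕ) (hl : 0 < l) (hσ : 0 < σ) (N x y r₁ r₂ : ℤ)
    (hN : 2 ^ (σ + l + 3) < N)
    (hx₁ : -2 ^ l ≤ x) (hx₂ : x ≤ 2 ^ l) (hy₁ : -2 ^ l ≤ y) (hy₂ : y ≤ 2 ^ l)
    (hr₁ : 1 ≤ r₁) (hr₁' : r₁ < 2 ^ σ)
    (hr₂ : 0 ≤ r₂) (hr₂' : r₂ ≤ N / 2) (hsum : N / 2 < r₁ + r₂) :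
    (0 < r₁ * (y - x) + r₂ ∧ r₁ * (y - x) + r₂ < N) ∧
      (r₁ * (y - x) + r₂ ≤ N / 2 ↔ y ≤ x) := by
  set A := r₁ * (y - x) with hA
  set P : ℤ := 2 ^ σ * 2 ^ l with hP
  have hPpos : (0:ℤ) < P := by positivity
  have hsP : (2:ℤ) ^ σ ≤ P := by
    have : (1:ℤ) ≤ 2 ^ l := one_le_pow₀ (by norm_num)
    nlinarith [pow_pos (by norm_num : (0:ℤ) < 2) σ]
  have hNP : 8 * P < N := by
    have : (2:ℤ) ^ (σ + l + 3) = P * 8 := by rw [hP, pow_add, pow_add]; ring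
    linarith [this ▸ hN]
  by_cases hxy : y ≤ x
  · have hA0 : A ≤ 0 := mul_nonpos_of_nonneg_of_nonpos (by linarith) (by linarith)
    have hAlo : -(2 * P) ≤ A := by
      have h1 : (0:ℤ) ≤ r₁ * (y - x + 2 * 2 ^ l) := by nlinarith
      have h2 : r₁ * (2 * 2 ^ l) ≤ 2 ^ σ * (2 * 2 ^ l) := by
        have : (0:ℤ) < 2 * 2 ^ l := by positivity
        nlinarith
      rw [hA, hP]; nlinarith
    refine ⟨⟨by omega, by omega⟩, ⟨fun _ => hxy, fun _ => by omega⟩⟩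
  · push_neg at hxy
    have h1 : (1:ℤ) ≤ y - x := by omega
    have hAlo : r₁ ≤ A := by nlinarith
    have hAhi : A ≤ 2 * P := by
      have h2 : r₁ * (y - x) ≤ r₁ * (2 * 2 ^ l) := by nlinarith
      have h3 : r₁ * (2 * 2 ^ l) ≤ 2 ^ σ * (2 * 2 ^ l) := by
        have : (0:ℤ) < 2 * 2 ^ l := by positivity
        nlinarith
      rw [hA, hP]; nlinarith
    exact ⟨⟨by omega, by omega⟩, ⟨fun h => absurd h (by omega), fun h => absurd h (by omega)⟩⟩
end

section
/- The two forms of FastPai encryption agree: for any m, r ≥ 0 and N > 1, (1+N)^m · (h^r mod N)^N ≡ (1 + m·N) · ((h^N mod N²))^r (mod N²). -/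
/-- Binomial congruence: `(1+N)^m ≡ 1 + m·N (mod N²)`. -/
lemma fastPai_aux_binom (N m : ℕ) :
    (1 + (N : ℤ)) ^ m ≡ 1 + (m : ℤ) * N [ZMOD (N : ℤ) ^ 2] := by
  induction m with
  | zero => simp
  | succ k ih =>
    calc (1 + (N : ℤ)) ^ (k + 1) = (1 + (N : ℤ)) ^ k * (1 + (N : ℤ)) := pow_succ _ _
      _ ≡ (1 + (k : ℤ) * N) * (1 + (N : ℤ)) [ZMOD (N : ℤ) ^ 2] := ih.mul_right _
      _ = 1 + ((k : ℤ) + 1) * N + (k : ℤ) * (N : ℤ) ^ 2 := by ring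
      _ ≡ 1 + ((k : ℤ) + 1) * N + (k : ℤ) * 0 [ZMOD (N : ℤ) ^ 2] :=
          (Int.ModEq.refl _).add ((Int.ModEq.refl (k : ℤ)).mul (Int.modEq_zero_iff_dvd.mpr dvd_rfl))
      _ = 1 + ((k : ℕ) + 1 : ℕ) * N := by push_cast; ring

/-- If `x ≡ y (mod N)` then `x^N ≡ y^N (mod N²)`. -/
lemma fastPai_aux_pow (N : ℕ) (x y : ℤ) (hxy : x ≡ y [ZMOD (N : ℤ)]) :
    x ^ N ≡ y ^ N [ZMOD (N : ℤ) ^ 2] := by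
  have h2 : (N : ℤ) ∣ x - y := Int.ModEq.dvd hxy.symm
  have h3 : (N : ℤ) ∣ (∑ i ∈ Finset.range N, x ^ i * y ^ (N - 1 - i)) := by
    have hx : ((x : ZMod N)) = (y : ZMod N) := (ZMod.intCast_eq_intCast_iff _ _ _).mpr hxy
    rw [← ZMod.intCast_zmod_eq_zero_iff_dvd]
    push_cast
    rw [hx]
    have hterm : ∀ i ∈ Finset.range N,
        (y : ZMod N) ^ i * (y : ZMod N) ^ (N - 1 - i) = (y : ZMod N) ^ (N - 1) := by
      intro i hi
      rw [← pow_add]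
      congr 1
      have := Finset.mem_range.mp hi
      omega
    rw [Finset.sum_congr rfl hterm, Finset.sum_const, Finset.card_range]
    simp
  have h4 : ((N : ℤ)) ^ 2 ∣ x ^ N - y ^ N := by
    rw [← geom_sum₂_mul x y N, sq]
    exact mul_dvd_mul h3 h2
  exact (Int.modEq_iff_dvd.mpr h4).symm

/-- The two forms of FastPai encryption agree modulo `N²`:
`(1+N)^m · (h^r mod N)^N ≡ (1 + m·N) · (h^N mod N²)^r (mod N²)`. -/
theorem fastPai_enc_forms_agree (N m r : ℕ) (h : ℤ) (hN : 1 < N) :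
    (1 + (N : ℤ)) ^ m * (h ^ r % (N : ℤ)) ^ N
      ≡ (1 + (m : ℤ) * N) * (h ^ N % (N : ℤ) ^ 2) ^ r [ZMOD (N : ℤ) ^ 2] := by
  have hmod1 : (h ^ r % (N : ℤ)) ≡ h ^ r [ZMOD (N : ℤ)] :=
    Int.emod_emod_of_dvd _ dvd_rfl
  have e2 : (h ^ r % (N : ℤ)) ^ N ≡ (h ^ r) ^ N [ZMOD (N : ℤ) ^ 2] :=
    fastPai_aux_pow N _ _ hmod1
  have hmod2 : (h ^ N % (N : ℤ) ^ 2) ≡ h ^ N [ZMOD (N : ℤ) ^ 2] :=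
    Int.emod_emod_of_dvd _ dvd_rfl
  have e3 : (h ^ N % (N : ℤ) ^ 2) ^ r ≡ (h ^ N) ^ r [ZMOD (N : ℤ) ^ 2] := hmod2.pow r
  have key : (h ^ r) ^ N = (h ^ N) ^ r := by
    rw [← pow_mul, ← pow_mul, Nat.mul_comm]
  calc (1 + (N : ℤ)) ^ m * (h ^ r % (N : ℤ)) ^ N
      ≡ (1 + (m : ℤ) * N) * ((h ^ r) ^ N) [ZMOD (N : ℤ) ^ 2] :=
        (fastPai_aux_binom N m).mul e2
    _ = (1 + (m : ℤ) * N) * ((h ^ N) ^ r) := by rw [key]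
    _ ≡ (1 + (m : ℤ) * N) * (h ^ N % (N : ℤ) ^ 2) ^ r [ZMOD (N : ℤ) ^ 2] :=
        e3.symm.mul_left _
end
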